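/- arXiv:1910.08932 — 2 statements merged into one kernel-verified Lean document; each statement's English description precedes it below -/
import Mathlib

section
/- If pq is even and gcd(r,q) = 1, then U(pr², q) = U(p, q), where U(p,q) = (1/q)·Σ_{x∈Z/qZ} exp(2πi p x²/(2q)) computed as (1/(2q))·Σ_{x=0}^{2q-1} exp(πi p x²/q). -/
open Finset

/-- `U(p,q) = (1/(2q))·Σ_{x=0}^{2q-1} exp(πi·p·x²/q)`. -/
noncomputable def U (p q : ℤ) : ℂ :=
  (1 / (2 * (q : ℂ))) * ∑ x ∈ Finset.range (2 * q).toNat,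
    Complex.exp (Real.pi * Complex.I * p * (x : ℂ) ^ 2 / q)

noncomputable def Uf (p q x : ℤ) : ℂ :=
  Complex.exp (Real.pi * Complex.I * p * (x : ℂ) ^ 2 / q)

lemma Uf_period (p q : ℤ) (hq : q ≠ 0) (hpq : Even (p * q)) (x k : ℤ) :
    Uf p q (x + k * q) = Uf p q x := by
  obtain ⟨c, hc⟩ := hpq
  unfold Uf
  rw [← mul_one (Complex.exp (Real.pi * Complex.I * p * (x : ℂ) ^ 2 / q)),
    ← Complex.exp_int_mul_two_pi_mul_I (p * x * k + c * k ^ 2), ← Complex.exp_add]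
  have hq' : (q : ℂ) ≠ 0 := Int.cast_ne_zero.mpr hq
  have hc' : (p : ℂ) * (q : ℂ) = 2 * (c : ℂ) := by
    have h2 : (p : ℂ) * (q : ℂ) = (c : ℂ) + (c : ℂ) := by exact_mod_cast hc
    linear_combination h2
  congr 1
  field_simp
  push_cast
  linear_combination ((k : ℂ) ^ 2 * (q : ℂ)) * hc'

lemma Uf_congr (p q : ℤ) (hq : 0 < q) (hpq : Even (p * q)) (x y : ℤ)
    (h : (x : ZMod q.toNat) = (y : ZMod q.toNat)) : Uf p q x = Uf p q y := by
  rw [ZMod.intCast_eq_intCast_iff] at h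
  obtain ⟨k, hk⟩ := h.dvd
  have hn : (q.toNat : ℤ) = q := Int.toNat_of_nonneg hq.le
  rw [hn] at hk
  have hy : y = x + k * q := by linarith [hk]
  rw [hy, Uf_period p q hq.ne' hpq]

lemma sum_range_eq_sum_zmod (p q : ℤ) (hq : 0 < q) [NeZero q.toNat] :
    ∑ x ∈ Finset.range q.toNat, Uf p q x = ∑ z : ZMod q.toNat, Uf p q (z.val : ℤ) := by
  refine Finset.sum_nbij' (fun x => ((x : ℕ) : ZMod q.toNat)) (fun z => z.val) ?_ ?_ ?_ ?_ ?_
  · intro a _; exact Finset.mem_univ _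
  · intro z _; exact Finset.mem_range.mpr z.val_lt
  · intro a ha; exact ZMod.val_natCast_of_lt (Finset.mem_range.mp ha)
  · intro z _; exact ZMod.natCast_rightInverse z
  · intro a ha; rw [ZMod.val_natCast_of_lt (Finset.mem_range.mp ha)]

/-- If `pq` is even and `gcd(r,q) = 1`, then `U(pr², q) = U(p, q)`. -/
theorem U_mul_sq (p q r : ℤ) (hq : 0 < q) (hpq : Even (p * q)) (hrq : Int.gcd r q = 1) :
    U (p * r ^ 2) q = U p q := by
  have hn : (q.toNat : ℤ) = q := Int.toNat_of_nonneg hq.le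
  haveI : NeZero q.toNat := ⟨by omega⟩
  have hpq2 : Even (p * r ^ 2 * q) := by
    obtain ⟨c, hc⟩ := hpq
    exact ⟨c * r ^ 2, by linear_combination r ^ 2 * hc⟩
  -- the (r : ZMod q.toNat) is a unit
  obtain ⟨a, b, hab⟩ := Int.isCoprime_iff_gcd_eq_one.mpr hrq
  have hq0 : ((q : ℤ) : ZMod q.toNat) = 0 := by
    rw [← hn]; push_cast; exact ZMod.natCast_self _
  have hunit : IsUnit ((r : ℤ) : ZMod q.toNat) := by
    refine IsUnit.of_mul_eq_one ((a : ℤ) : ZMod q.toNat) ?_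
    have : ((a * r + b * q : ℤ) : ZMod q.toNat) = 1 := by rw [hab]; push_cast; ring
    push_cast at this
    rw [hq0] at this
    linear_combination this
  -- key: equality of half-period sums
  have key : ∑ x ∈ Finset.range q.toNat, Uf (p * r ^ 2) q x
      = ∑ x ∈ Finset.range q.toNat, Uf p q x := by
    rw [sum_range_eq_sum_zmod _ _ hq, sum_range_eq_sum_zmod _ _ hq]
    have step1 : ∀ z : ZMod q.toNat, Uf (p * r ^ 2) q (z.val : ℤ)
        = Uf p q (((((r : ZMod q.toNat) * z)).val : ℤ)) := by
      intro z
      have e1 : Uf (p * r ^ 2) q (z.val : ℤ) = Uf p q (r * (z.val : ℤ)) := by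
        unfold Uf; congr 1; push_cast; ring
      rw [e1]
      apply Uf_congr p q hq hpq
      push_cast
      simp [ZMod.natCast_val, ZMod.cast_id]
    simp_rw [step1]
    obtain ⟨u, hu⟩ := hunit
    rw [← hu]
    exact Fintype.sum_equiv (Units.mulLeft u) _ _ (fun z => rfl)
  -- now relate the full sums
  have h2q : (2 * q).toNat = q.toNat + q.toNat := by omega
  have expand : ∀ P : ℤ, Even (P * q) →
      ∑ x ∈ Finset.range (2 * q).toNat, Complex.exp (Real.pi * Complex.I * P * (x : ℂ) ^ 2 / q)
      = 2 * ∑ x ∈ Finset.range q.toNat, Uf P q x := by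
    intro P hP
    have hf : ∀ x : ℕ,
        Complex.exp (Real.pi * Complex.I * P * (x : ℂ) ^ 2 / q) = Uf P q (x : ℤ) := by
      intro x; unfold Uf; push_cast; ring_nf
    simp_rw [hf]
    rw [h2q, Finset.sum_range_add]
    have hshift : ∀ x : ℕ, Uf P q ((q.toNat + x : ℕ) : ℤ) = Uf P q (x : ℤ) := by
      intro x
      have : ((q.toNat + x : ℕ) : ℤ) = (x : ℤ) + 1 * q := by push_cast [hn]; ring
      rw [this, Uf_period P q hq.ne' hP]
    simp_rw [hshift]
    ring
  unfold U
  rw [expand _ hpq2, expand _ hpq, key]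
end

section
/- Limit of det(-iτ)^{1/2} at a real symmetric boundary point: for nonsingular symmetric real n×n matrix t, lim_{ε→0⁺} det(-i(t + εi·I_n))^{1/2} = |det t|^{1/2}·e^{-iπσ_t/4}, where σ_t is the signature of t and det(-iτ)^{1/2} is the branch on the Siegel upper half-space positive for purely imaginary τ. -/
open Matrix Finset

lemma aux_cpow_sq {z : ℂ} (hz : z ≠ 0) : (z ^ ((1:ℂ)/2))^2 = z := by
  rw [sq, ← Complex.cpow_add _ _ hz]
  norm_num

lemma aux_val (l : ℝ) (hl : l ≠ 0) :
    (-(Complex.I * l)) ^ ((1:ℂ)/2)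
      = (Real.sqrt |l| : ℂ) *
        Complex.exp (-Real.pi * Complex.I * (if 0 < l then (1:ℤ) else -1) / 4) := by
  have hz : (-(Complex.I * l)) ≠ 0 := by
    simp [Complex.ext_iff, hl]
  rw [Complex.cpow_def_of_ne_zero hz, Complex.log]
  rcases lt_or_gt_of_ne hl with hneg | hpos
  · have h1 : (-(Complex.I * (l:ℂ))) = ((-l : ℝ) : ℂ) * Complex.I := by
      push_cast; ring
    have harg : (-(Complex.I * (l:ℂ))).arg = Real.pi / 2 := by
      rw [h1, Complex.arg_real_mul _ (by linarith), Complex.arg_I]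
    have habs : ‖(-(Complex.I * (l:ℂ)))‖ = |l| := by
      simp [norm_neg, norm_mul, Complex.norm_real]
    rw [harg, habs, if_neg (by linarith)]
    have hsqrt : Real.log |l| / 2 = Real.log (Real.sqrt |l|) := by
      rw [Real.log_sqrt (abs_nonneg l)]
    rw [show ((Real.log |l| : ℂ) + (Real.pi/2 : ℝ) * Complex.I) * (1/2)
        = (Real.log |l| / 2 : ℝ) + (Real.pi/4 : ℝ) * Complex.I by push_cast; ring]
    rw [Complex.exp_add, hsqrt, ← Complex.ofReal_exp,
      Real.exp_log (Real.sqrt_pos.2 (abs_pos.2 hl))]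
    congr 1
    congr 1
    push_cast
    ring
  · have h1 : (-(Complex.I * (l:ℂ))) = ((l : ℝ) : ℂ) * (-Complex.I) := by
      push_cast; ring
    have harg : (-(Complex.I * (l:ℂ))).arg = -(Real.pi / 2) := by
      rw [h1, Complex.arg_real_mul _ hpos, Complex.arg_neg_I]
    have habs : ‖(-(Complex.I * (l:ℂ)))‖ = |l| := by
      simp [norm_neg, norm_mul, Complex.norm_real]
    rw [harg, habs, if_pos hpos]
    have hsqrt : Real.log |l| / 2 = Real.log (Real.sqrt |l|) := by
      rw [Real.log_sqrt (abs_nonneg l)]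
    rw [show ((Real.log |l| : ℂ) + (-(Real.pi/2) : ℝ) * Complex.I) * (1/2)
        = (Real.log |l| / 2 : ℝ) + (-(Real.pi/4) : ℝ) * Complex.I by push_cast; ring]
    rw [Complex.exp_add, hsqrt, ← Complex.ofReal_exp,
      Real.exp_log (Real.sqrt_pos.2 (abs_pos.2 hl))]
    congr 1
    congr 1
    push_cast; ring

lemma aux_det {n : ℕ} (t : Matrix (Fin n) (Fin n) ℝ) (ht : t.IsHermitian) (s ε : ℝ) :
    Matrix.det ((-Complex.I) • ((s:ℂ) • t.map (fun x : ℝ => (x:ℂ))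
        + (ε * Complex.I) • (1 : Matrix (Fin n) (Fin n) ℂ)))
      = ∏ i, ((ε:ℂ) - Complex.I * s * ht.eigenvalues i) := by
  classical
  set lam := ht.eigenvalues with hlamdef
  set U : Matrix (Fin n) (Fin n) ℝ := (ht.eigenvectorUnitary : Matrix (Fin n) (Fin n) ℝ) with hU
  have hspec : t = U * diagonal lam * star U := by
    simpa using ht.spectral_theorem
  have hunit : U * star U = 1 := mem_unitaryGroup_iff.mp ht.eigenvectorUnitary.2
  set f : ℝ →+* ℂ := Complex.ofRealHom with hf
  set V := U.map (fun x : ℝ => (x:ℂ)) with hV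
  set W := (star U).map (fun x : ℝ => (x:ℂ)) with hW
  have hVW : V * W = 1 := by
    rw [hV, hW, show (fun x : ℝ => (x:ℂ)) = ⇑f from rfl, ← Matrix.map_mul, hunit]
    exact Matrix.map_one _ (map_zero f) (map_one f)
  have hTmap : t.map (fun x : ℝ => (x:ℂ))
      = V * diagonal (fun i => (lam i : ℂ)) * W := by
    rw [hspec, show (fun x : ℝ => (x:ℂ)) = ⇑f from rfl, Matrix.map_mul, Matrix.map_mul]
    congr 1
    congr 1
    rw [Matrix.diagonal_map (map_zero f)]
    rfl
  set c : ℂ := -Complex.I * s with hc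
  have hmain : (-Complex.I) • ((s:ℂ) • t.map (fun x : ℝ => (x:ℂ))
        + (ε * Complex.I) • (1 : Matrix (Fin n) (Fin n) ℂ))
      = V * (c • diagonal (fun i => (lam i : ℂ)) + (ε:ℂ) • 1) * W := by
    rw [Matrix.mul_add, Matrix.add_mul]
    rw [smul_add, smul_smul, smul_smul]
    rw [hTmap]
    have h1 : V * (c • (diagonal fun i => (lam i : ℂ))) * W
        = c • (V * diagonal (fun i => (lam i : ℂ)) * W) := by
      rw [Matrix.mul_smul, Matrix.smul_mul]
    have h2 : V * ((ε:ℂ) • (1 : Matrix (Fin n) (Fin n) ℂ)) * W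
        = (ε:ℂ) • (V * W) := by
      rw [Matrix.mul_smul, Matrix.smul_mul, Matrix.mul_one]
    rw [h1, h2, hVW, hc]
    congr 1
    congr 1
    ring_nf
    rw [Complex.I_sq]
    ring
  rw [hmain, Matrix.det_mul, Matrix.det_mul]
  have hdetVW : V.det * W.det = 1 := by
    rw [← Matrix.det_mul, hVW, Matrix.det_one]
  have hdiag : c • diagonal (fun i => (lam i : ℂ)) + (ε:ℂ) • (1 : Matrix (Fin n) (Fin n) ℂ)
      = diagonal (fun i => (ε:ℂ) - Complex.I * s * lam i) := by
    rw [← Matrix.diagonal_one, ← Matrix.diagonal_smul, ← Matrix.diagonal_smul,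
      Matrix.diagonal_add]
    refine congrArg _ (funext fun i => ?_)
    simp only [Pi.add_apply, Pi.smul_apply, smul_eq_mul, Pi.one_apply, hc]
    ring
  rw [hdiag, Matrix.det_diagonal]
  rw [mul_comm, ← mul_assoc]
  rw [mul_comm W.det V.det, hdetVW, one_mul]

lemma aux_mem {n : ℕ} (t : Matrix (Fin n) (Fin n) ℝ) (ht : t.IsHermitian) (s ε : ℝ) (hε : 0 < ε) :
    ((s:ℂ) • t.map (fun x : ℝ => (x:ℂ)) + (ε * Complex.I) • (1 : Matrix (Fin n) (Fin n) ℂ)) ∈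
      {τ : Matrix (Fin n) (Fin n) ℂ | τ.IsSymm ∧ (τ.map Complex.im).PosDef} := by
  classical
  have hts : tᵀ = t := ht
  constructor
  · show Matrix.IsSymm _
    unfold Matrix.IsSymm
    rw [Matrix.transpose_add, Matrix.transpose_smul, Matrix.transpose_smul,
      Matrix.transpose_one, ← Matrix.transpose_map, hts]
  · have hmap : (((s:ℂ) • t.map (fun x : ℝ => (x:ℂ))
        + (ε * Complex.I) • (1 : Matrix (Fin n) (Fin n) ℂ)).map Complex.im)
        = diagonal (fun _ => ε) := by
      ext i j
      by_cases h : i = j <;>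
        simp [Matrix.map_apply, Matrix.add_apply, Matrix.smul_apply, Matrix.one_apply,
          Matrix.diagonal_apply, h, Complex.add_im, Complex.mul_im]
    rw [hmap]
    exact Matrix.PosDef.diagonal (fun _ => hε)

/-- Limit of the branch `det(-iτ)^{1/2}` at a real symmetric boundary point.
Here `g` is the unique continuous branch of `τ ↦ det(-iτ)^{1/2}` on the Siegel upper
half-space (symmetric complex matrices with positive definite imaginary part),
characterized by `g(τ)² = det(-iτ)` and positivity for purely imaginary `τ`.
For a nonsingular real symmetric `t` with signature `σ_t`,
`lim_{ε→0⁺} g(t + εi·I) = |det t|^{1/2}·e^{-iπσ_t/4}`. -/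
theorem det_branch_boundary_limit (n : ℕ) (t : Matrix (Fin n) (Fin n) ℝ)
    (ht : t.IsHermitian) (hdet : t.det ≠ 0)
    (g : Matrix (Fin n) (Fin n) ℂ → ℂ)
    (hsq : ∀ τ : Matrix (Fin n) (Fin n) ℂ, τ.IsSymm → (τ.map Complex.im).PosDef →
      g τ ^ 2 = Matrix.det ((-Complex.I) • τ))
    (hcont : ContinuousOn g {τ : Matrix (Fin n) (Fin n) ℂ |
      τ.IsSymm ∧ (τ.map Complex.im).PosDef})
    (hpos : ∀ v : Matrix (Fin n) (Fin n) ℝ, v.PosDef →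
      ∃ c : ℝ, 0 < c ∧ g (Complex.I • v.map (fun x : ℝ => (x : ℂ))) = (c : ℂ)) :
    Filter.Tendsto
      (fun ε : ℝ => g (t.map (fun x : ℝ => (x : ℂ)) + (ε * Complex.I) • (1 : Matrix (Fin n) (Fin n) ℂ)))
      (nhdsWithin 0 (Set.Ioi 0))
      (nhds ((Real.sqrt |t.det| : ℂ) * Complex.exp (-Real.pi * Complex.I *
        (((univ.filter fun i => 0 < ht.eigenvalues i).card : ℤ) -
         ((univ.filter fun i => ht.eigenvalues i < 0).card : ℤ)) / 4))) := by
  classical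
  set lam := ht.eigenvalues with hlamdef
  have hdet_prod : t.det = ∏ i, lam i := by simpa using ht.det_eq_prod_eigenvalues
  have hlam_ne : ∀ i, lam i ≠ 0 := by
    intro i hi
    exact hdet (by rw [hdet_prod]; exact Finset.prod_eq_zero (mem_univ i) hi)
  set T := t.map (fun x : ℝ => (x:ℂ)) with hT
  set τf : ℝ → ℝ → Matrix (Fin n) (Fin n) ℂ :=
    fun s ε => (s:ℂ) • T + (ε * Complex.I) • 1 with hτf
  set h : ℝ → ℝ → ℂ := fun s ε => ∏ i, ((ε:ℂ) - Complex.I * s * lam i) ^ ((1:ℂ)/2) with hh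
  have hbase_re : ∀ (s ε : ℝ) (i : Fin n), ((ε:ℂ) - Complex.I * s * lam i).re = ε := by
    intro s ε i
    simp [Complex.sub_re, Complex.mul_re]
  have hbase_ne : ∀ (s ε : ℝ), 0 < ε → ∀ i : Fin n,
      ((ε:ℂ) - Complex.I * s * lam i) ≠ 0 := by
    intro s ε hε i h0
    have := hbase_re s ε i
    rw [h0] at this
    simp at this
    exact hε.ne this
  -- key : for all ε > 0, g (τf 1 ε) = h 1 ε
  have key : ∀ ε : ℝ, 0 < ε → g (τf 1 ε) = h 1 ε := by
    intro ε hε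
    set G : ℝ → ℂ := fun s => g (τf s ε) with hG
    set H : ℝ → ℂ := fun s => h s ε with hH
    have hmem : ∀ s : ℝ, τf s ε ∈ {τ : Matrix (Fin n) (Fin n) ℂ |
        τ.IsSymm ∧ (τ.map Complex.im).PosDef} := fun s => aux_mem t ht s ε hε
    have hτcont : Continuous fun s : ℝ => τf s ε := by
      apply Continuous.add
      · exact (Complex.continuous_ofReal.smul continuous_const)
      · exact continuous_const
    have hGcont : Continuous G := hcont.comp_continuous hτcont hmem
    have hHcont : Continuous H := by
      apply continuous_finset_prod
      intro i _
      rw [continuous_iff_continuousAt]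
      intro s
      have hb : Continuous fun s : ℝ => (ε:ℂ) - Complex.I * s * lam i :=
        continuous_const.sub ((continuous_const.mul Complex.continuous_ofReal).mul
          continuous_const)
      exact (continuousAt_cpow_const
        (Complex.mem_slitPlane_iff.mpr (Or.inl (by rw [hbase_re]; exact hε)))).comp
        hb.continuousAt
    have hGsq : ∀ s : ℝ, G s ^ 2 = H s ^ 2 := by
      intro s
      rw [hG, hH]
      show g (τf s ε) ^ 2 = h s ε ^ 2
      rw [hsq _ (hmem s).1 (hmem s).2, hτf, aux_det t ht s ε, hh]
      rw [← Finset.prod_pow]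
      exact (Finset.prod_congr rfl fun i _ => aux_cpow_sq (hbase_ne s ε hε i)).symm
    have hHne : ∀ s : ℝ, H s ≠ 0 := by
      intro s
      rw [hH]
      show h s ε ≠ 0
      rw [hh]
      rw [Finset.prod_ne_zero_iff]
      intro i _
      simp only [ne_eq, Complex.cpow_eq_zero_iff, not_and_or, not_ne_iff]
      exact Or.inl (hbase_ne s ε hε i)
    have hG0 : G 0 = H 0 := by
      have hpd : (ε • (1 : Matrix (Fin n) (Fin n) ℝ)).PosDef := by
        have : ε • (1 : Matrix (Fin n) (Fin n) ℝ) = diagonal (fun _ => ε) := by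
          ext i j
          by_cases hij : i = j <;>
            simp [Matrix.smul_apply, Matrix.one_apply, Matrix.diagonal_apply, hij]
        rw [this]
        exact Matrix.PosDef.diagonal (fun _ => hε)
      obtain ⟨c, hc, hgc⟩ := hpos (ε • 1) hpd
      have hτ0 : τf 0 ε = Complex.I • (ε • (1 : Matrix (Fin n) (Fin n) ℝ)).map
          (fun x : ℝ => (x : ℂ)) := by
        ext i j
        by_cases hij : i = j <;>
          simp [hτf, Matrix.add_apply, Matrix.smul_apply, Matrix.map_apply, Matrix.one_apply,
            hij, hT]
        · ring
      have hG0c : G 0 = (c : ℂ) := by rw [hG]; show g (τf 0 ε) = _; rw [hτ0]; exact hgc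
      have hH0 : H 0 = ((Real.sqrt ε ^ n : ℝ) : ℂ) := by
        rw [hH]; show h 0 ε = _
        rw [hh]
        show ∏ i : Fin n, ((ε:ℂ) - Complex.I * ((0:ℝ):ℂ) * (lam i : ℂ)) ^ ((1:ℂ)/2)
          = ((Real.sqrt ε ^ n : ℝ) : ℂ)
        have : ∀ i : Fin n, ((ε:ℂ) - Complex.I * ((0:ℝ):ℂ) * (lam i:ℂ)) ^ ((1:ℂ)/2)
            = ((Real.sqrt ε : ℝ) : ℂ) := by
          intro i
          rw [show ((ε:ℂ) - Complex.I * ((0:ℝ):ℂ) * (lam i:ℂ)) = ((ε:ℝ):ℂ) by push_cast; ring]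
          rw [show ((1:ℂ)/2) = (((1:ℝ)/2 : ℝ) : ℂ) by push_cast; ring]
          rw [← Complex.ofReal_cpow hε.le]
          rw [← Real.sqrt_eq_rpow]
        rw [Finset.prod_congr rfl (fun i _ => this i), Finset.prod_const, card_univ,
          Fintype.card_fin]
        push_cast
        ring
      -- compare squares
      have hsq0 : (c:ℂ)^2 = ((Real.sqrt ε ^ n : ℝ) : ℂ)^2 := by
        rw [← hG0c, hGsq 0, hH0]
      have hsqR : c^2 = (Real.sqrt ε ^ n)^2 := by
        exact_mod_cast hsq0
      have hcn : c = Real.sqrt ε ^ n := by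
        have h1 : 0 ≤ c := hc.le
        have h2 : 0 ≤ Real.sqrt ε ^ n := pow_nonneg (Real.sqrt_nonneg ε) n
        nlinarith
      rw [hG0c, hH0, hcn]
    -- clopen argument
    set A : Set ℝ := {s | G s = H s} with hA
    have hA1 : IsClosed A := isClosed_eq hGcont hHcont
    have hcompl : Aᶜ = {s | G s = -H s} := by
      ext s
      simp only [hA, Set.mem_compl_iff, Set.mem_setOf_eq]
      constructor
      · intro hne
        have hfac : (G s - H s) * (G s + H s) = 0 := by
          linear_combination hGsq s
        rcases mul_eq_zero.mp hfac with h' | h'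
        · exact absurd (sub_eq_zero.mp h') hne
        · exact eq_neg_of_add_eq_zero_left h'
      · intro he hGH
        apply hHne s
        have h1 : H s = -H s := hGH.symm.trans he
        have h2 : (2:ℂ) * H s = 0 := by linear_combination h1
        simpa using h2
    have hAopen : IsOpen A := by
      have hcc : IsClosed Aᶜ := by
        rw [hcompl]
        exact isClosed_eq hGcont hHcont.neg
      simpa using hcc.isOpen_compl
    have hclopen : IsClopen A := ⟨hA1, hAopen⟩
    rcases isClopen_iff.mp hclopen with hAe | hAu
    · exfalso
      have h0A : (0:ℝ) ∈ A := hG0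
      rw [hAe] at h0A
      exact h0A
    · have h1A : (1:ℝ) ∈ A := by rw [hAu]; trivial
      exact h1A
  -- counting
  set P := (univ.filter fun i => 0 < lam i).card with hPdef
  set Q := (univ.filter fun i => lam i < 0).card with hQdef
  have hsum_sgn : ∑ i, (if 0 < lam i then (1:ℤ) else -1) = (P:ℤ) - (Q:ℤ) := by
    rw [Finset.sum_ite, Finset.sum_const, Finset.sum_const]
    have hfilter : univ.filter (fun i => ¬ 0 < lam i) = univ.filter (fun i => lam i < 0) := by
      apply Finset.filter_congr
      intro i _
      constructor
      · intro h'
        exact lt_of_le_of_ne (not_lt.mp h') (hlam_ne i)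
      · intro h'
        exact not_lt.mpr h'.le
    rw [hfilter]
    simp only [nsmul_eq_mul, mul_one, mul_neg, ← hPdef, ← hQdef]
    ring
  have hprod_sqrt : (∏ i, Real.sqrt |lam i|) = Real.sqrt |t.det| := by
    have h2 : (∏ i, Real.sqrt |lam i|)^2 = ∏ i, |lam i| := by
      rw [← Finset.prod_pow]
      exact Finset.prod_congr rfl fun i _ => Real.sq_sqrt (abs_nonneg _)
    have h3 : |t.det| = (∏ i, Real.sqrt |lam i|)^2 := by
      rw [h2, hdet_prod, abs_prod]
    rw [h3, Real.sqrt_sq (Finset.prod_nonneg fun i _ => Real.sqrt_nonneg _)]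
  have hcastsum : (∑ i, (Int.cast (if 0 < lam i then (1:ℤ) else -1) : ℂ))
      = (((P:ℤ) - (Q:ℤ) : ℤ) : ℂ) := by
    rw [← hsum_sgn]
    push_cast
    rfl
  have hval : (∏ i, (-(Complex.I * (lam i : ℂ))) ^ ((1:ℂ)/2))
      = (Real.sqrt |t.det| : ℂ) * Complex.exp (-Real.pi * Complex.I *
        (((univ.filter fun i => 0 < lam i).card : ℤ) -
         ((univ.filter fun i => lam i < 0).card : ℤ)) / 4) := by
    rw [Finset.prod_congr rfl (fun i _ => aux_val (lam i) (hlam_ne i)),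
      Finset.prod_mul_distrib, ← Complex.exp_sum]
    congr 1
    · rw [← Complex.ofReal_prod, hprod_sqrt]
    · congr 1
      calc ∑ i : Fin n, -(Real.pi:ℂ) * Complex.I * (Int.cast (if 0 < lam i then (1:ℤ) else -1) : ℂ) / 4
          = (-(Real.pi:ℂ) * Complex.I / 4) * ∑ i, (Int.cast (if 0 < lam i then (1:ℤ) else -1) : ℂ) := by
            rw [Finset.mul_sum]
            exact Finset.sum_congr rfl fun i _ => by ring
        _ = (-(Real.pi:ℂ) * Complex.I / 4) * (((P:ℤ) - (Q:ℤ) : ℤ) : ℂ) := by rw [hcastsum]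
        _ = -Real.pi * Complex.I * (((univ.filter fun i => 0 < lam i).card : ℤ) -
              ((univ.filter fun i => lam i < 0).card : ℤ)) / 4 := by
            rw [← hPdef, ← hQdef]
            push_cast
            ring
  have hslit : ∀ i : Fin n, (-(Complex.I * (lam i : ℂ))) ∈ Complex.slitPlane := by
    intro i
    apply Complex.mem_slitPlane_iff.mpr
    right
    simp only [Complex.neg_im, Complex.mul_im, Complex.I_re, Complex.ofReal_im,
      Complex.I_im, Complex.ofReal_re, zero_mul, one_mul, zero_add, ne_eq, neg_eq_zero]
    exact hlam_ne i
  have hlim : Filter.Tendsto (fun ε : ℝ => h 1 ε) (nhdsWithin 0 (Set.Ioi 0))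
      (nhds (∏ i, (-(Complex.I * (lam i : ℂ))) ^ ((1:ℂ)/2))) := by
    rw [hh]
    apply tendsto_finset_prod
    intro i _
    have hcb : Continuous fun ε : ℝ => (ε:ℂ) - Complex.I * ((1:ℝ):ℂ) * lam i :=
      Complex.continuous_ofReal.sub continuous_const
    have hb : Filter.Tendsto (fun ε : ℝ => (ε:ℂ) - Complex.I * ((1:ℝ):ℂ) * lam i)
        (nhdsWithin 0 (Set.Ioi 0)) (nhds (-(Complex.I * (lam i : ℂ)))) := by
      have h0 := (hcb.tendsto 0).mono_left (nhdsWithin_le_nhds (s := Set.Ioi (0:ℝ)))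
      simpa using h0
    exact (continuousAt_cpow_const (hslit i)).tendsto.comp hb
  have heq : (fun ε : ℝ => h 1 ε) =ᶠ[nhdsWithin 0 (Set.Ioi 0)]
      (fun ε : ℝ => g (T + (ε * Complex.I) • 1)) := by
    filter_upwards [self_mem_nhdsWithin] with ε hε
    rw [← key ε hε, hτf]
    norm_num
  rw [← hval]
  exact hlim.congr' heq
end
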